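/- Let γ: (-ε, L+ε) → ℝ² be a C² curve parametrized by arc length (so ‖γ'(t)‖ = 1 for all t), and suppose there is C₃ > 0 with ‖γ(t*) - γ(t)‖ ≥ C₃|t* - t| for all t*, t ∈ [0, L]. Then for every fixed integer M ≥ 1 there exists a constant C such that for all n large and all 0 ≤ k1 ≤ k2 ≤ M and 1 ≤ i ≤ n - k2, |d_{i+k1,i+k2} - (d_{i,i+k2} - d_{i,i+k1})| ≤ C n^{-3}, where t_i = φ(L(i-1)/(n-1)) for a C² function φ with φ(0)=0, φ(L)=L, min φ' > 0, and d_{j,l} = ‖γ(t_j) - γ(t_l)‖. -/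

import Mathlib

/-- The design points `t_i = φ(L(i-1)/(n-1))` on `[0, L]`. -/
noncomputable def designPt (φ : ℝ → ℝ) (L : ℝ) (n j : ℕ) : ℝ :=
  φ (L * ((j : ℝ) - 1) / ((n : ℝ) - 1))


open intervalIntegral Set RealInnerProductSpace

/-- Chord length estimate for a unit-speed curve with Lipschitz derivative. -/
lemma chord_est (γ : ℝ → EuclideanSpace ℝ (Fin 2)) (a b K : ℝ)
    (hab : a ≤ b) (hK : 0 ≤ K)
    (hdiff : ∀ u ∈ Set.Icc a b, HasDerivAt γ (deriv γ u) u)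
    (hcont : ContinuousOn (deriv γ) (Set.Icc a b))
    (hunit : ∀ u ∈ Set.Icc a b, ‖deriv γ u‖ = 1)
    (hlip : ∀ u ∈ Set.Icc a b, ‖deriv γ u - deriv γ a‖ ≤ K * (u - a)) :
    (b - a) - K^2 * (b - a)^3 / 6 ≤ ‖γ b - γ a‖ ∧ ‖γ b - γ a‖ ≤ b - a := by
  have hmem : ∀ u ∈ Set.uIcc a b, u ∈ Set.Icc a b := by
    rw [Set.uIcc_of_le hab]; exact fun u hu => hu
  have hint : IntervalIntegrable (deriv γ) MeasureTheory.volume a b := by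
    apply ContinuousOn.intervalIntegrable
    exact hcont.mono (by rw [Set.uIcc_of_le hab])
  have hftc : ∫ u in a..b, deriv γ u = γ b - γ a :=
    integral_eq_sub_of_hasDerivAt (fun u hu => hdiff u (hmem u hu)) hint
  constructor
  · -- lower bound via inner product with deriv γ a
    set v := deriv γ a with hv
    have hva : ‖v‖ = 1 := hunit a ⟨le_refl a, hab⟩
    have hinner : ⟪γ b - γ a, v⟫ ≤ ‖γ b - γ a‖ := by
      calc ⟪γ b - γ a, v⟫ ≤ ‖γ b - γ a‖ * ‖v‖ := real_inner_le_norm _ _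
        _ = ‖γ b - γ a‖ := by rw [hva, mul_one]
    refine le_trans ?_ hinner
    -- compute ⟪γ b - γ a, v⟫ as integral
    have hg : ∀ u ∈ Set.uIcc a b, HasDerivAt (fun t => ⟪γ t, v⟫) ⟪deriv γ u, v⟫ u := by
      intro u hu
      have := (hdiff u (hmem u hu)).inner ℝ (hasDerivAt_const u v)
      simpa using this
    have hgint : IntervalIntegrable (fun u => ⟪deriv γ u, v⟫) MeasureTheory.volume a b := by
      apply ContinuousOn.intervalIntegrable
      apply ContinuousOn.inner (hcont.mono (by rw [Set.uIcc_of_le hab])) continuousOn_const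
    have hftc2 : ∫ u in a..b, ⟪deriv γ u, v⟫ = ⟪γ b, v⟫ - ⟪γ a, v⟫ :=
      integral_eq_sub_of_hasDerivAt hg hgint
    have hsub : ⟪γ b - γ a, v⟫ = ∫ u in a..b, ⟪deriv γ u, v⟫ := by
      rw [hftc2, inner_sub_left]
    rw [hsub]
    -- lower bound the integrand
    have hlow : ∀ u ∈ Set.Icc a b, 1 - K^2 * (u-a)^2 / 2 ≤ ⟪deriv γ u, v⟫ := by
      intro u hu
      have h1 : ‖deriv γ u - v‖^2 = ‖deriv γ u‖^2 - 2 * ⟪deriv γ u, v⟫ + ‖v‖^2 :=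
        norm_sub_sq_real _ _
      have h2 : ‖deriv γ u - v‖^2 ≤ (K * (u-a))^2 := by
        apply pow_le_pow_left₀ (norm_nonneg _) (hlip u hu)
      have hu1 : ‖deriv γ u‖ = 1 := hunit u hu
      nlinarith [h1, h2, hu1, hva]
    have hlint : IntervalIntegrable (fun u => 1 - K^2 * (u-a)^2 / 2) MeasureTheory.volume a b :=
      (Continuous.intervalIntegrable
      (continuous_const.sub ((continuous_const.mul (((continuous_id.sub continuous_const).pow 2))).div_const 2)) a b)
    have hmono : ∫ u in a..b, (1 - K^2 * (u-a)^2 / 2) ≤ ∫ u in a..b, ⟪deriv γ u, v⟫ := by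
      apply integral_mono_on hab hlint hgint
      exact hlow
    refine le_trans ?_ hmono
    -- compute the explicit integral
    have hF : ∀ u ∈ Set.uIcc a b, HasDerivAt (fun t => (t - a) - K^2 * (t-a)^3 / 6)
        (1 - K^2 * (u-a)^2 / 2) u := by
      intro u _
      have h1 : HasDerivAt (fun t : ℝ => t - a) 1 u := by
        simpa using (hasDerivAt_id u).sub_const a
      have h2 : HasDerivAt (fun t : ℝ => K^2 * (t-a)^3 / 6) (K^2 * (3 * (u-a)^2 * 1) / 6) u := by
        exact ((h1.pow 3).const_mul (K^2)).div_const 6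
      have := h1.sub h2
      exact this.congr_deriv (by ring)
    have := integral_eq_sub_of_hasDerivAt hF hlint
    rw [this]
    simp only [sub_self]
    ring_nf
    exact le_refl _
  · -- upper bound: chord ≤ arc length
    rw [← hftc]
    calc ‖∫ u in a..b, deriv γ u‖ ≤ ∫ u in a..b, ‖deriv γ u‖ :=
          norm_integral_le_integral_norm hab -- probably wrong name
      _ = ∫ u in a..b, (1:ℝ) := by
          apply integral_congr
          intro u hu; exact hunit u (hmem u hu)
      _ = b - a := by simp


theorem stmt_7 (ε L : ℝ) (hε : 0 < ε) (hL : 0 < L)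
    (γ : ℝ → EuclideanSpace ℝ (Fin 2))
    (hγ : ContDiffOn ℝ 2 γ (Set.Ioo (-ε) (L + ε)))
    (hunit : ∀ t ∈ Set.Ioo (-ε) (L + ε), ‖deriv γ t‖ = 1)
    (C₃ : ℝ) (hC₃ : 0 < C₃)
    (hlow : ∀ t ∈ Set.Icc (0 : ℝ) L, ∀ t' ∈ Set.Icc (0 : ℝ) L,
      C₃ * |t' - t| ≤ ‖γ t' - γ t‖)
    (φ : ℝ → ℝ) (hφ : ContDiff ℝ 2 φ) (hφ0 : φ 0 = 0) (hφL : φ L = L)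
    (hφ' : ∀ s ∈ Set.Icc (0 : ℝ) L, 0 < deriv φ s)
    (M : ℕ) (hM : 1 ≤ M) :
    ∃ C : ℝ, ∃ N : ℕ, ∀ n : ℕ, N ≤ n → ∀ k1 k2 i : ℕ,
      k1 ≤ k2 → k2 ≤ M → 1 ≤ i → i ≤ n - k2 →
      |‖γ (designPt φ L n (i + k1)) - γ (designPt φ L n (i + k2))‖ -
          (‖γ (designPt φ L n i) - γ (designPt φ L n (i + k2))‖ -
            ‖γ (designPt φ L n i) - γ (designPt φ L n (i + k1))‖)| ≤
        C / (n : ℝ) ^ 3 := by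
  have hU : IsOpen (Set.Ioo (-ε) (L + ε)) := isOpen_Ioo
  have hsub : Set.Icc (0:ℝ) L ⊆ Set.Ioo (-ε) (L + ε) := fun x hx =>
    ⟨lt_of_lt_of_le (neg_lt_zero.mpr hε) hx.1, lt_of_le_of_lt hx.2 (by linarith)⟩
  have hγ1 : ContDiffOn ℝ 1 (deriv γ) (Set.Ioo (-ε) (L + ε)) :=
    hγ.deriv_of_isOpen hU (by norm_num)
  have hγdiff : ∀ u ∈ Set.Ioo (-ε) (L + ε), HasDerivAt γ (deriv γ u) u := fun u hu =>
    (((hγ.differentiableOn (by norm_num)) u hu).differentiableAt (hU.mem_nhds hu)).hasDerivAt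
  have hγ'diff : ∀ u ∈ Set.Ioo (-ε) (L + ε), HasDerivAt (deriv γ) (deriv (deriv γ) u) u :=
    fun u hu =>
    (((hγ1.differentiableOn (by norm_num)) u hu).differentiableAt (hU.mem_nhds hu)).hasDerivAt
  have hγ''cont : ContinuousOn (deriv (deriv γ)) (Set.Ioo (-ε) (L + ε)) :=
    (hγ1.deriv_of_isOpen (m := 0) hU (by norm_num)).continuousOn
  obtain ⟨K0, hK0⟩ := (isCompact_Icc (a := (0:ℝ)) (b := L)).exists_bound_of_continuousOn
    (hγ''cont.mono hsub)
  set K := max K0 0 with hKdef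
  have hK : 0 ≤ K := le_max_right _ _
  have hlipγ : ∀ x ∈ Set.Icc (0:ℝ) L, ∀ y ∈ Set.Icc (0:ℝ) L,
      ‖deriv γ y - deriv γ x‖ ≤ K * |y - x| := by
    intro x hx y hy
    have := (convex_Icc (0:ℝ) L).norm_image_sub_le_of_norm_hasDerivWithin_le
      (f := deriv γ) (f' := deriv (deriv γ)) (C := K)
      (fun z hz => (hγ'diff z (hsub hz)).hasDerivWithinAt)
      (fun z hz => le_trans (hK0 z hz) (le_max_left _ _)) hx hy
    simpa [Real.norm_eq_abs] using this
  -- φ side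
  have hφdiff : ∀ x : ℝ, HasDerivAt φ (deriv φ x) x := fun x =>
    ((hφ.differentiable (by norm_num)) x).hasDerivAt
  obtain ⟨Kφ0, hKφ0⟩ := (isCompact_Icc (a := (0:ℝ)) (b := L)).exists_bound_of_continuousOn
    ((hφ.continuous_deriv (by norm_num)).continuousOn)
  set Kφ := max Kφ0 0 with hKφdef
  have hKφ : 0 ≤ Kφ := le_max_right _ _
  have hlipφ : ∀ x ∈ Set.Icc (0:ℝ) L, ∀ y ∈ Set.Icc (0:ℝ) L,
      |φ y - φ x| ≤ Kφ * |y - x| := by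
    intro x hx y hy
    have := (convex_Icc (0:ℝ) L).norm_image_sub_le_of_norm_hasDerivWithin_le
      (f := φ) (f' := deriv φ) (C := Kφ)
      (fun z hz => (hφdiff z).hasDerivWithinAt)
      (fun z hz => le_trans (hKφ0 z hz) (le_max_left _ _)) hx hy
    simpa [Real.norm_eq_abs] using this
  have hmonoφ : MonotoneOn φ (Set.Icc (0:ℝ) L) := by
    apply StrictMonoOn.monotoneOn
    apply strictMonoOn_of_deriv_pos (convex_Icc 0 L) hφ.continuous.continuousOn
    intro x hx
    rw [interior_Icc] at hx
    exact hφ' x (Set.Ioo_subset_Icc_self hx)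
  have hφmaps : ∀ x ∈ Set.Icc (0:ℝ) L, φ x ∈ Set.Icc (0:ℝ) L := by
    intro x hx
    constructor
    · rw [← hφ0]; exact hmonoφ (Set.left_mem_Icc.mpr hL.le) hx hx.1
    · rw [← hφL]; exact hmonoφ hx (Set.right_mem_Icc.mpr hL.le) hx.2
  -- the chord estimate on [0, L]
  have key : ∀ p q : ℝ, p ∈ Set.Icc (0:ℝ) L → q ∈ Set.Icc (0:ℝ) L → p ≤ q →
      (q - p) - K^2 * (q - p)^3 / 6 ≤ ‖γ q - γ p‖ ∧ ‖γ q - γ p‖ ≤ q - p := by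
    intro p q hp hq hpq
    have hIcc : Set.Icc p q ⊆ Set.Icc (0:ℝ) L := Set.Icc_subset_Icc hp.1 hq.2
    apply chord_est γ p q K hpq hK
    · intro u hu; exact hγdiff u (hsub (hIcc hu))
    · exact hγ1.continuousOn.mono (fun u hu => hsub (hIcc hu))
    · intro u hu; exact hunit u (hsub (hIcc hu))
    · intro u hu
      have := hlipγ p (hIcc (Set.left_mem_Icc.mpr hpq)) u (hIcc hu)
      rwa [abs_of_nonneg (sub_nonneg.mpr hu.1)] at this
  refine ⟨K^2 * (2*Kφ*L*(M:ℝ))^3 / 2, 2*M + 2, ?_⟩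
  intro n hn k1 k2 i hk12 hk2M hi1 hi2
  have hik2n : i + k2 ≤ n := by omega
  have hnR : (4:ℝ) ≤ (n:ℝ) := by exact_mod_cast (by omega : 4 ≤ n)
  have hden : (0:ℝ) < (n:ℝ) - 1 := by linarith
  have hnpos : (0:ℝ) < (n:ℝ) := by linarith
  set xj : ℕ → ℝ := fun j => L * ((j:ℝ) - 1) / ((n:ℝ) - 1) with hxj
  have hx_mem : ∀ j : ℕ, 1 ≤ j → j ≤ n → xj j ∈ Set.Icc (0:ℝ) L := by
    intro j hj1 hjn
    have hj1R : (1:ℝ) ≤ (j:ℝ) := by exact_mod_cast hj1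
    have hjnR : (j:ℝ) ≤ (n:ℝ) := by exact_mod_cast hjn
    constructor
    · apply div_nonneg (mul_nonneg hL.le (by linarith)) hden.le
    · rw [div_le_iff₀ hden]
      nlinarith
  have hx_mono : ∀ j l : ℕ, j ≤ l → xj j ≤ xj l := by
    intro j l hjl
    have : (j:ℝ) ≤ (l:ℝ) := by exact_mod_cast hjl
    rw [hxj]
    simp only
    exact (div_le_div_iff_of_pos_right hden).mpr (mul_le_mul_of_nonneg_left (by linarith) hL.le)
  have hdes : ∀ j : ℕ, designPt φ L n j = φ (xj j) := fun j => rfl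
  -- memberships
  have hmemi : xj i ∈ Set.Icc (0:ℝ) L := hx_mem i hi1 (by omega)
  have hmemk1 : xj (i+k1) ∈ Set.Icc (0:ℝ) L := hx_mem (i+k1) (by omega) (by omega)
  have hmemk2 : xj (i+k2) ∈ Set.Icc (0:ℝ) L := hx_mem (i+k2) (by omega) (by omega)
  set a := designPt φ L n i with hadef
  set b := designPt φ L n (i+k1) with hbdef
  set c := designPt φ L n (i+k2) with hcdef
  have ha : a ∈ Set.Icc (0:ℝ) L := by rw [hadef, hdes]; exact hφmaps _ hmemi
  have hb : b ∈ Set.Icc (0:ℝ) L := by rw [hbdef, hdes]; exact hφmaps _ hmemk1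
  have hc : c ∈ Set.Icc (0:ℝ) L := by rw [hcdef, hdes]; exact hφmaps _ hmemk2
  have hab : a ≤ b := by
    rw [hadef, hbdef, hdes, hdes]
    exact hmonoφ hmemi hmemk1 (hx_mono i (i+k1) (by omega))
  have hbc : b ≤ c := by
    rw [hbdef, hcdef, hdes, hdes]
    exact hmonoφ hmemk1 hmemk2 (hx_mono (i+k1) (i+k2) (by omega))
  have hac : a ≤ c := le_trans hab hbc
  -- gap bound
  have hxdiff : xj (i+k2) - xj i = L * (k2:ℝ) / ((n:ℝ) - 1) := by
    rw [hxj]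
    simp only
    rw [div_sub_div_same]
    congr 1
    push_cast
    ring
  have hgap : c - a ≤ 2*Kφ*L*(M:ℝ) / (n:ℝ) := by
    have h1 : c - a ≤ |φ (xj (i+k2)) - φ (xj i)| := by
      rw [hcdef, hadef, hdes, hdes]; exact le_abs_self _
    have h2 : |φ (xj (i+k2)) - φ (xj i)| ≤ Kφ * |xj (i+k2) - xj i| :=
      hlipφ _ hmemi _ hmemk2
    have h3 : |xj (i+k2) - xj i| = L * (k2:ℝ) / ((n:ℝ) - 1) := by
      rw [hxdiff]; exact abs_of_nonneg (by positivity)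
    have hk2MR : (k2:ℝ) ≤ (M:ℝ) := by exact_mod_cast hk2M
    have hMpos : (1:ℝ) ≤ (M:ℝ) := by exact_mod_cast hM
    have h4 : L * (k2:ℝ) / ((n:ℝ) - 1) ≤ 2 * L * (M:ℝ) / (n:ℝ) := by
      rw [div_le_div_iff₀ hden hnpos]
      nlinarith [mul_nonneg (mul_nonneg hL.le (by positivity : (0:ℝ) ≤ (M:ℝ))) (by linarith : (0:ℝ) ≤ (n:ℝ) - 2),
        mul_le_mul_of_nonneg_right (mul_le_mul_of_nonneg_left hk2MR hL.le) hnpos.le]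
    calc c - a ≤ Kφ * |xj (i+k2) - xj i| := le_trans h1 h2
      _ = Kφ * (L * (k2:ℝ) / ((n:ℝ) - 1)) := by rw [h3]
      _ ≤ Kφ * (2 * L * (M:ℝ) / (n:ℝ)) := by
          apply mul_le_mul_of_nonneg_left h4 hKφ
      _ = 2*Kφ*L*(M:ℝ) / (n:ℝ) := by ring
  -- apply chord estimates
  obtain ⟨l1, u1⟩ := key b c hb hc hbc
  obtain ⟨l2, u2⟩ := key a c ha hc hac
  obtain ⟨l3, u3⟩ := key a b ha hb hab
  rw [norm_sub_rev (γ b) (γ c), norm_sub_rev (γ a) (γ c), norm_sub_rev (γ a) (γ b)]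
  have hK2 : (0:ℝ) ≤ K^2 := sq_nonneg K
  have hcubebc : (c-b)^3 ≤ (c-a)^3 :=
    pow_le_pow_left₀ (sub_nonneg.mpr hbc) (by linarith) 3
  have hcubeba : (b-a)^3 ≤ (c-a)^3 :=
    pow_le_pow_left₀ (sub_nonneg.mpr hab) (by linarith) 3
  have hgap3 : (c-a)^3 ≤ (2*Kφ*L*(M:ℝ))^3 / (n:ℝ)^3 := by
    rw [← div_pow]
    exact pow_le_pow_left₀ (sub_nonneg.mpr hac) hgap 3
  have hfin : K^2 * (c-a)^3 ≤ K^2 * ((2*Kφ*L*(M:ℝ))^3 / (n:ℝ)^3) :=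
    mul_le_mul_of_nonneg_left hgap3 hK2
  have hCn : K^2 * (2*Kφ*L*(M:ℝ))^3 / 2 / (n:ℝ)^3
      = K^2 * ((2*Kφ*L*(M:ℝ))^3 / (n:ℝ)^3) / 2 := by ring
  rw [hCn]
  have h0 : (0:ℝ) ≤ K^2 * (c-a)^3 :=
    mul_nonneg hK2 (pow_nonneg (sub_nonneg.mpr hac) 3)
  have hbc' := mul_le_mul_of_nonneg_left hcubebc hK2
  have hba' := mul_le_mul_of_nonneg_left hcubeba hK2
  rw [abs_le]
  constructor
  · linarith
  · linarith
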